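/- Let U1, U2 ⊂ ℝ^{p,q} (p,q ≥ 1) be two disjoint open sets, each of 'intersection type', i.e. each is either a translate of U_S = {q>0}, a translate of U_T = {q<0}, or a degenerate half-space H_{v,α} = {w : b(v,w) > α} with v isotropic nonzero. Then either both are degenerate half-spaces H_{v,α1}, H_{-v,α2} with the same isotropic direction and α1 ≥ -α2, or U1 = v + U_S and U2 = v + U_T with the same translation vector v. Moreover, any third open set U3 of intersection type must intersect U1 ∪ U2. -/

import Mathlib

/-- The standard symmetric bilinear form of signature `(p,q)` on `ℝⁿ`, `n = p + q`. -/
noncomputable def formB (p q : ℕ) (v w : Fin (p + q) → ℝ) : ℝ :=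
  ∑ i : Fin (p + q), (if (i : ℕ) < p then -(v i * w i) else v i * w i)

/-- An open set of *intersection type*: a translate of `U_S = {q > 0}`, a translate of
`U_T = {q < 0}`, or a degenerate half-space `H_{v,α}` with `v` isotropic nonzero. -/
def InterType (p q : ℕ) (U : Set (Fin (p + q) → ℝ)) : Prop :=
  (∃ v, U = {w | formB p q (w - v) (w - v) > 0}) ∨
  (∃ v, U = {w | formB p q (w - v) (w - v) < 0}) ∨
  (∃ v α, v ≠ 0 ∧ formB p q v v = 0 ∧ U = {w | formB p q v w > α})


/-- sign-flip on the first `p` coordinates -/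
def flipv (p q : ℕ) (v : Fin (p + q) → ℝ) : Fin (p + q) → ℝ :=
  fun i => if (i : ℕ) < p then -v i else v i

def pPart (p q : ℕ) (v : Fin (p + q) → ℝ) : Fin (p + q) → ℝ :=
  fun i => if (i : ℕ) < p then 0 else v i

def nPart (p q : ℕ) (v : Fin (p + q) → ℝ) : Fin (p + q) → ℝ :=
  fun i => if (i : ℕ) < p then v i else 0

lemma formB_comm (p q : ℕ) (v w : Fin (p + q) → ℝ) : formB p q v w = formB p q w v :=
  Finset.sum_congr rfl (by intros i _; by_cases h : (i:ℕ) < p <;> simp [h] <;> ring)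

lemma formB_add_right (p q : ℕ) (v w x : Fin (p + q) → ℝ) :
    formB p q v (w + x) = formB p q v w + formB p q v x := by
  unfold formB
  rw [← Finset.sum_add_distrib]
  exact Finset.sum_congr rfl (by intros i _; by_cases h : (i:ℕ) < p <;> simp [h] <;> ring)

lemma formB_smul_right (p q : ℕ) (t : ℝ) (v w : Fin (p + q) → ℝ) :
    formB p q v (t • w) = t * formB p q v w := by
  unfold formB
  rw [Finset.mul_sum]
  exact Finset.sum_congr rfl (by intros i _; by_cases h : (i:ℕ) < p <;> simp [h] <;> ring)

lemma formB_add_left (p q : ℕ) (v w x : Fin (p + q) → ℝ) :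
    formB p q (v + w) x = formB p q v x + formB p q w x := by
  rw [formB_comm, formB_add_right, formB_comm p q x v, formB_comm p q x w]

lemma formB_smul_left (p q : ℕ) (t : ℝ) (v w : Fin (p + q) → ℝ) :
    formB p q (t • v) w = t * formB p q v w := by
  rw [formB_comm, formB_smul_right, formB_comm]

lemma formB_neg_left (p q : ℕ) (v w : Fin (p + q) → ℝ) :
    formB p q (-v) w = -formB p q v w := by
  have := formB_smul_left p q (-1) v w
  simpa using this

lemma formB_combo (p q : ℕ) (v x y : Fin (p + q) → ℝ) (s t : ℝ) :
    formB p q v (s • x + t • y) = s * formB p q v x + t * formB p q v y := by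
  rw [formB_add_right, formB_smul_right, formB_smul_right]

lemma formB_expand (p q : ℕ) (x d : Fin (p + q) → ℝ) :
    formB p q (x + d) (x + d)
      = formB p q x x + 2 * formB p q x d + formB p q d d := by
  rw [formB_add_left, formB_add_right, formB_add_right, formB_comm p q d x]; ring

lemma formB_flip (p q : ℕ) (v u : Fin (p + q) → ℝ) :
    formB p q v (flipv p q u) = ∑ i, v i * u i := by
  unfold formB flipv
  exact Finset.sum_congr rfl (by intros i _; by_cases h : (i:ℕ) < p <;> simp [h] <;> ring)

lemma dotE_self_pos (p q : ℕ) (v : Fin (p + q) → ℝ) (hv : v ≠ 0) :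
    0 < ∑ i, v i * v i := by
  obtain ⟨i, hi⟩ := Function.ne_iff.mp hv
  exact Finset.sum_pos' (fun j _ => mul_self_nonneg _)
    ⟨i, Finset.mem_univ i, mul_self_pos.mpr hi⟩

lemma formB_surj (p q : ℕ) (v : Fin (p + q) → ℝ) (hv : v ≠ 0) (r : ℝ) :
    ∃ w, formB p q v w = r := by
  have hN := dotE_self_pos p q v hv
  refine ⟨(r / (∑ i, v i * v i)) • flipv p q v, ?_⟩
  rw [formB_smul_right, formB_flip]
  exact div_mul_cancel₀ _ hN.ne'

lemma iso_parts (p q : ℕ) (v : Fin (p + q) → ℝ) (hv : v ≠ 0) (hiso : formB p q v v = 0) :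
    ∃ S : ℝ, 0 < S ∧ formB p q v (pPart p q v) = S ∧
      formB p q (pPart p q v) (pPart p q v) = S ∧
      formB p q v (nPart p q v) = -S ∧
      formB p q (nPart p q v) (nPart p q v) = -S := by
  set SP : ℝ := ∑ i : Fin (p+q), (if (i:ℕ) < p then 0 else v i * v i) with hSP
  set SN : ℝ := ∑ i : Fin (p+q), (if (i:ℕ) < p then v i * v i else 0) with hSN
  have h1 : formB p q v v = SP - SN := by
    rw [hSP, hSN, ← Finset.sum_sub_distrib]
    exact Finset.sum_congr rfl (by intros i _; by_cases h : (i:ℕ) < p <;> simp [formB, h] <;> ring)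
  have h2 : (∑ i, v i * v i) = SP + SN := by
    rw [hSP, hSN, ← Finset.sum_add_distrib]
    exact Finset.sum_congr rfl (by intros i _; by_cases h : (i:ℕ) < p <;> simp [h])
  have h3 : formB p q v (pPart p q v) = SP :=
    Finset.sum_congr rfl (by intros i _; by_cases h : (i:ℕ) < p <;> simp [pPart, h])
  have h4 : formB p q (pPart p q v) (pPart p q v) = SP :=
    Finset.sum_congr rfl (by intros i _; by_cases h : (i:ℕ) < p <;> simp [pPart, h])
  have h5 : formB p q v (nPart p q v) = -SN := by
    rw [hSN, ← Finset.sum_neg_distrib]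
    exact Finset.sum_congr rfl (by intros i _; by_cases h : (i:ℕ) < p <;> simp [formB, nPart, h])
  have h6 : formB p q (nPart p q v) (nPart p q v) = -SN := by
    rw [hSN, ← Finset.sum_neg_distrib]
    exact Finset.sum_congr rfl (by intros i _; by_cases h : (i:ℕ) < p <;> simp [formB, nPart, h])
  have hpos := dotE_self_pos p q v hv
  rw [h2] at hpos
  have heq : SP = SN := by rw [h1] at hiso; linarith
  exact ⟨SP, by linarith, h3, h4, by rw [h5, heq], by rw [h6, heq]⟩

lemma formB_neg_right (p q : ℕ) (v w : Fin (p + q) → ℝ) :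
    formB p q v (-w) = -formB p q v w := by
  rw [formB_comm, formB_neg_left, formB_comm]

noncomputable def dotE (p q : ℕ) (v w : Fin (p + q) → ℝ) : ℝ := ∑ i, v i * w i

lemma dotE_comm (p q : ℕ) (v w : Fin (p + q) → ℝ) : dotE p q v w = dotE p q w v :=
  Finset.sum_congr rfl (by intros; ring)

lemma dotE_add_right (p q : ℕ) (v w x : Fin (p + q) → ℝ) :
    dotE p q v (w + x) = dotE p q v w + dotE p q v x := by
  unfold dotE
  rw [← Finset.sum_add_distrib]
  exact Finset.sum_congr rfl (by intros; simp; ring)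

lemma dotE_smul_right (p q : ℕ) (t : ℝ) (v w : Fin (p + q) → ℝ) :
    dotE p q v (t • w) = t * dotE p q v w := by
  unfold dotE
  rw [Finset.mul_sum]
  exact Finset.sum_congr rfl (by intros; simp; ring)

lemma formB_flip' (p q : ℕ) (v u : Fin (p + q) → ℝ) :
    formB p q v (flipv p q u) = dotE p q v u := formB_flip p q v u

lemma dotE_self_pos' (p q : ℕ) (v : Fin (p + q) → ℝ) (hv : v ≠ 0) :
    0 < dotE p q v v := dotE_self_pos p q v hv

lemma exists_spacelike (p q : ℕ) (hq : 1 ≤ q) :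
    ∃ e : Fin (p + q) → ℝ, formB p q e e = 1 := by
  have hplt : p < p + q := by omega
  refine ⟨fun i => if (i : ℕ) = p then 1 else 0, ?_⟩
  unfold formB
  rw [Finset.sum_eq_single (⟨p, hplt⟩ : Fin (p + q))]
  · simp
  · intro j _ hj
    have hj' : (j : ℕ) ≠ p := fun h => hj (Fin.ext h)
    simp [hj']
  · simp

lemma exists_timelike (p q : ℕ) (hp : 1 ≤ p) :
    ∃ e : Fin (p + q) → ℝ, formB p q e e = -1 := by
  have hplt : 0 < p + q := by omega
  refine ⟨fun i => if (i : ℕ) = 0 then 1 else 0, ?_⟩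
  unfold formB
  rw [Finset.sum_eq_single (⟨0, hplt⟩ : Fin (p + q))]
  · have : (0 : ℕ) < p := hp
    simp [this]
  · intro j _ hj
    have hj' : (j : ℕ) ≠ 0 := fun h => hj (Fin.ext h)
    simp [hj']
  · simp

lemma meet_SS (p q : ℕ) (hq : 1 ≤ q) (a b : Fin (p + q) → ℝ) :
    ∃ w, 0 < formB p q (w - a) (w - a) ∧ 0 < formB p q (w - b) (w - b) := by
  obtain ⟨e, he⟩ := exists_spacelike p q hq
  set c := formB p q e (a - b) with hc
  set m := formB p q (a - b) (a - b) with hm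
  set t : ℝ := 2 * |c| + |m| + 1 with ht
  have ht1 : 1 ≤ t := by
    have := abs_nonneg c; have := abs_nonneg m; rw [ht]; linarith
  have ht0 : 0 ≤ t := by linarith
  refine ⟨a + t • e, ?_, ?_⟩
  · have h1 : a + t • e - a = t • e := add_sub_cancel_left a _
    rw [h1, formB_smul_left, formB_smul_right, he]
    nlinarith
  · have h1 : a + t • e - b = t • e + (a - b) := by abel
    rw [h1, formB_expand, formB_smul_left, formB_smul_right, he,
      formB_smul_left, ← hc, ← hm]
    have hcc : t * (-|c|) ≤ t * c := mul_le_mul_of_nonneg_left (neg_abs_le c) ht0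
    have hmm : -|m| ≤ m := neg_abs_le m
    have hsq : t * t = 2 * |c| * t + (|m| + 1) * t := by rw [ht]; ring
    have h3 : (|m| + 1) * 1 ≤ (|m| + 1) * t :=
      mul_le_mul_of_nonneg_left ht1 (by positivity)
    nlinarith [hsq, h3, hcc, hmm]

lemma meet_TT (p q : ℕ) (hp : 1 ≤ p) (a b : Fin (p + q) → ℝ) :
    ∃ w, formB p q (w - a) (w - a) < 0 ∧ formB p q (w - b) (w - b) < 0 := by
  obtain ⟨e, he⟩ := exists_timelike p q hp
  set c := formB p q e (a - b) with hc
  set m := formB p q (a - b) (a - b) with hm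
  set t : ℝ := 2 * |c| + |m| + 1 with ht
  have ht1 : 1 ≤ t := by
    have := abs_nonneg c; have := abs_nonneg m; rw [ht]; linarith
  have ht0 : 0 ≤ t := by linarith
  refine ⟨a + t • e, ?_, ?_⟩
  · have h1 : a + t • e - a = t • e := add_sub_cancel_left a _
    rw [h1, formB_smul_left, formB_smul_right, he]
    nlinarith
  · have h1 : a + t • e - b = t • e + (a - b) := by abel
    rw [h1, formB_expand, formB_smul_left, formB_smul_right, he,
      formB_smul_left, ← hc, ← hm]
    have hcc : t * c ≤ t * |c| := mul_le_mul_of_nonneg_left (le_abs_self c) ht0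
    have hmm : m ≤ |m| := le_abs_self m
    have hsq : t * t = 2 * |c| * t + (|m| + 1) * t := by rw [ht]; ring
    have h3 : (|m| + 1) * 1 ≤ (|m| + 1) * t :=
      mul_le_mul_of_nonneg_left ht1 (by positivity)
    nlinarith [hsq, h3, hcc, hmm]

lemma meet_ST (p q : ℕ) (hp : 1 ≤ p) (hq : 1 ≤ q) (a b : Fin (p + q) → ℝ) (hab : a ≠ b) :
    ∃ w, 0 < formB p q (w - a) (w - a) ∧ formB p q (w - b) (w - b) < 0 := by
  have hd : a - b ≠ 0 := sub_ne_zero.mpr hab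
  set d := a - b with hdd
  set m := formB p q d d with hm
  have key : ∃ x, 0 < formB p q x x ∧ formB p q (x + d) (x + d) < 0 := by
    rcases lt_trichotomy m 0 with hm0 | hm0 | hm0
    · obtain ⟨e, he⟩ := exists_spacelike p q hq
      set c := formB p q e d with hc
      have hex : ∃ ε : ℝ, ε ≠ 0 ∧ ε * ε + 2 * (ε * c) + m < 0 := by
        by_cases h0 : c = 0
        · refine ⟨Real.sqrt (-m) / 2, ?_, ?_⟩
          · have : 0 < Real.sqrt (-m) := Real.sqrt_pos.mpr (by linarith)
            positivity
          · have h1 : Real.sqrt (-m) * Real.sqrt (-m) = -m :=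
              Real.mul_self_sqrt (by linarith)
            rw [h0]
            nlinarith [h1]
        · refine ⟨-c, neg_ne_zero.mpr h0, ?_⟩
          nlinarith [mul_self_nonneg c]
      obtain ⟨ε, hε0, hεk⟩ := hex
      refine ⟨ε • e, ?_, ?_⟩
      · rw [formB_smul_left, formB_smul_right, he]
        nlinarith [mul_self_pos.mpr hε0]
      · rw [formB_expand, formB_smul_left, formB_smul_right, he, formB_smul_left, ← hc, ← hm]
        nlinarith [hεk]
    · obtain ⟨S, hS, hvp, hpp, _, _⟩ := iso_parts p q d hd (by rw [← hm]; exact hm0)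
      refine ⟨-(pPart p q d), ?_, ?_⟩
      · rw [formB_neg_left, formB_neg_right, hpp]; linarith
      · rw [formB_expand, formB_neg_left, formB_neg_right, hpp,
          formB_neg_left, formB_comm p q (pPart p q d) d, hvp, ← hm]
        linarith
    · obtain ⟨u, hu⟩ := exists_timelike p q hp
      set c := formB p q d u with hc
      have hex : ∃ ε : ℝ, ε ≠ 0 ∧ 0 < m - 2 * (ε * c) - ε * ε := by
        by_cases h0 : c = 0
        · refine ⟨Real.sqrt m / 2, ?_, ?_⟩
          · have : 0 < Real.sqrt m := Real.sqrt_pos.mpr hm0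
            positivity
          · have h1 : Real.sqrt m * Real.sqrt m = m := Real.mul_self_sqrt (by linarith)
            rw [h0]
            nlinarith [h1]
        · refine ⟨-c, neg_ne_zero.mpr h0, ?_⟩
          nlinarith [mul_self_nonneg c]
      obtain ⟨ε, hε0, hεk⟩ := hex
      refine ⟨-d + ε • u, ?_, ?_⟩
      · rw [formB_expand, formB_neg_left, formB_neg_right, formB_neg_left,
          formB_smul_right, ← hm, ← hc, formB_smul_left, formB_smul_right, hu]
        nlinarith [hεk]
      · have h1 : -d + ε • u + d = ε • u := by abel
        rw [h1, formB_smul_left, formB_smul_right, hu]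
        nlinarith [mul_self_pos.mpr hε0]
  obtain ⟨x, hx1, hx2⟩ := key
  refine ⟨a + x, ?_, ?_⟩
  · rw [add_sub_cancel_left]; exact hx1
  · have h1 : a + x - b = x + d := by rw [hdd]; abel
    rw [h1]; exact hx2

lemma meet_SH (p q : ℕ) (a v : Fin (p + q) → ℝ) (α : ℝ)
    (hv : v ≠ 0) (hiso : formB p q v v = 0) :
    ∃ w, 0 < formB p q (w - a) (w - a) ∧ α < formB p q v w := by
  obtain ⟨S, hS, hvp, hpp, _, _⟩ := iso_parts p q v hv hiso
  set r := formB p q v a with hr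
  set t : ℝ := (|r| + |α| + 1) / S with ht
  have ht0 : 0 < t := div_pos (by positivity) hS
  have htS : t * S = |r| + |α| + 1 := div_mul_cancel₀ _ hS.ne'
  refine ⟨a + t • pPart p q v, ?_, ?_⟩
  · rw [add_sub_cancel_left, formB_smul_left, formB_smul_right, hpp]
    nlinarith [mul_pos ht0 (mul_pos ht0 hS)]
  · rw [formB_add_right, formB_smul_right, hvp, ← hr]
    nlinarith [neg_abs_le r, le_abs_self α, htS]

lemma meet_TH (p q : ℕ) (a v : Fin (p + q) → ℝ) (α : ℝ)
    (hv : v ≠ 0) (hiso : formB p q v v = 0) :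
    ∃ w, formB p q (w - a) (w - a) < 0 ∧ α < formB p q v w := by
  obtain ⟨S, hS, _, _, hvn, hnn⟩ := iso_parts p q v hv hiso
  set r := formB p q v a with hr
  set t : ℝ := (|r| + |α| + 1) / S with ht
  have ht0 : 0 < t := div_pos (by positivity) hS
  have htS : t * S = |r| + |α| + 1 := div_mul_cancel₀ _ hS.ne'
  refine ⟨a + t • (-(nPart p q v)), ?_, ?_⟩
  · rw [add_sub_cancel_left, formB_smul_left, formB_smul_right,
      formB_neg_left, formB_neg_right, hnn]
    nlinarith [mul_pos ht0 (mul_pos ht0 hS)]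
  · rw [formB_add_right, formB_smul_right, formB_neg_right, hvn, ← hr]
    nlinarith [neg_abs_le r, le_abs_self α, htS]

lemma meet_HH_indep (p q : ℕ) (v u : Fin (p + q) → ℝ) (hv : v ≠ 0)
    (h : ∀ c : ℝ, u ≠ c • v) (α β : ℝ) :
    ∃ w, α < formB p q v w ∧ β < formB p q u w := by
  set N := dotE p q v v with hN
  have hN0 : 0 < N := dotE_self_pos' p q v hv
  set c : ℝ := dotE p q v u / N with hcc
  set u' := u - c • v with hu'
  have hu'0 : u' ≠ 0 := by
    intro h0
    exact h c (by rw [← sub_eq_zero]; exact h0)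
  have hvu' : dotE p q v u' = 0 := by
    have : u' = u + (-c) • v := by rw [hu']; module
    rw [this, dotE_add_right, dotE_smul_right, ← hN, hcc]
    field_simp
    ring
  set M := dotE p q u' u' with hM
  have hM0 : 0 < M := dotE_self_pos' p q u' hu'0
  have huu' : dotE p q u u' = M := by
    have h2 : u = u' + c • v := by rw [hu']; module
    rw [dotE_comm, h2, dotE_add_right, dotE_smul_right, dotE_comm p q u' v, hvu', ← hM]
    ring
  set s : ℝ := (α + 1) / N with hs
  set t : ℝ := (β + 1 - s * dotE p q u v) / M with htt
  refine ⟨s • flipv p q v + t • flipv p q u', ?_, ?_⟩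
  · rw [formB_combo, formB_flip', formB_flip', ← hN, hvu', hs]
    field_simp
    linarith
  · rw [formB_combo, formB_flip', formB_flip', huu', htt]
    have : (β + 1 - s * dotE p q u v) / M * M = β + 1 - s * dotE p q u v :=
      div_mul_cancel₀ _ hM0.ne'
    rw [this]
    linarith

lemma meet_HH_pos (p q : ℕ) (v : Fin (p + q) → ℝ) (hv : v ≠ 0) (c α β : ℝ) (hc : 0 < c) :
    ∃ w, α < formB p q v w ∧ β < formB p q (c • v) w := by
  set N := dotE p q v v with hN
  have hN0 : 0 < N := dotE_self_pos' p q v hv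
  set t : ℝ := ((|α| + 1) + (|β| + 1) / c) / N with ht
  have htN : t * N = (|α| + 1) + (|β| + 1) / c := div_mul_cancel₀ _ hN0.ne'
  refine ⟨t • flipv p q v, ?_, ?_⟩
  · rw [formB_smul_right, formB_flip', ← hN, htN]
    have h1 : 0 < (|β| + 1) / c := div_pos (by positivity) hc
    nlinarith [le_abs_self α]
  · rw [formB_smul_left, formB_smul_right, formB_flip', ← hN, htN]
    have h1 : c * ((|β| + 1) / c) = |β| + 1 := mul_div_cancel₀ _ hc.ne'
    nlinarith [le_abs_self β, mul_pos hc (by positivity : (0:ℝ) < |α| + 1)]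

lemma cover_ST (p q : ℕ) (hp : 1 ≤ p) (hq : 1 ≤ q) (v : Fin (p + q) → ℝ)
    (U3 : Set (Fin (p + q) → ℝ)) (h3 : InterType p q U3) :
    (U3 ∩ ({w | formB p q (w - v) (w - v) > 0} ∪
      {w | formB p q (w - v) (w - v) < 0})).Nonempty := by
  rcases h3 with ⟨a, rfl⟩ | ⟨a, rfl⟩ | ⟨u, β, hu, huiso, rfl⟩
  · obtain ⟨w, hw1, hw2⟩ := meet_SS p q hq a v
    exact ⟨w, hw1, Or.inl hw2⟩
  · obtain ⟨w, hw1, hw2⟩ := meet_TT p q hp a v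
    exact ⟨w, hw1, Or.inr hw2⟩
  · obtain ⟨w, hw1, hw2⟩ := meet_SH p q v u β hu huiso
    exact ⟨w, hw2, Or.inl hw1⟩

lemma cover_HH (p q : ℕ) (hp : 1 ≤ p) (hq : 1 ≤ q) (v : Fin (p + q) → ℝ)
    (hv : v ≠ 0) (hiso : formB p q v v = 0) (c α1 α2 : ℝ) (hc : c < 0)
    (U3 : Set (Fin (p + q) → ℝ)) (h3 : InterType p q U3) :
    (U3 ∩ ({w | formB p q v w > α1} ∪ {w | formB p q (c • v) w > α2})).Nonempty := by
  rcases h3 with ⟨a, rfl⟩ | ⟨a, rfl⟩ | ⟨u, β, hu, huiso, rfl⟩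
  · obtain ⟨w, hw1, hw2⟩ := meet_SH p q a v α1 hv hiso
    exact ⟨w, hw1, Or.inl hw2⟩
  · obtain ⟨w, hw1, hw2⟩ := meet_TH p q a v α1 hv hiso
    exact ⟨w, hw1, Or.inl hw2⟩
  · by_cases hcu : ∃ c' : ℝ, u = c' • v
    · obtain ⟨c', rfl⟩ := hcu
      have hc'0 : c' ≠ 0 := by rintro rfl; simp at hu
      rcases lt_or_gt_of_ne hc'0 with hneg | hpos
      · obtain ⟨w, hw⟩ := formB_surj p q v hv (min (β / c') (α2 / c) - 1)
        refine ⟨w, ?_, Or.inr ?_⟩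
        · show β < formB p q (c' • v) w
          rw [formB_smul_left, hw]
          have h1 : min (β / c') (α2 / c) - 1 < β / c' := by
            have := min_le_left (β / c') (α2 / c); linarith
          have := (lt_div_iff_of_neg hneg).mp h1
          linarith
        · show α2 < formB p q (c • v) w
          rw [formB_smul_left, hw]
          have h1 : min (β / c') (α2 / c) - 1 < α2 / c := by
            have := min_le_right (β / c') (α2 / c); linarith
          have := (lt_div_iff_of_neg hc).mp h1
          linarith
      · obtain ⟨w, hw1, hw2⟩ := meet_HH_pos p q v hv c' α1 β hpos
        exact ⟨w, hw2, Or.inl hw1⟩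
    · push_neg at hcu
      obtain ⟨w, hw1, hw2⟩ := meet_HH_indep p q v u hv hcu α1 β
      exact ⟨w, hw2, Or.inl hw1⟩

/-- Two disjoint open sets of intersection type are either two degenerate half-spaces
`H_{v,α1}`, `H_{-v,α2}` with the same isotropic direction and `α1 ≥ -α2`, or a translate
`v + U_S` together with the corresponding translate `v + U_T`. Moreover any third set of
intersection type meets their union. -/
theorem disjoint_intersection_type (p q : ℕ) (hp : 1 ≤ p) (hq : 1 ≤ q)
    (U1 U2 : Set (Fin (p + q) → ℝ)) (h1 : InterType p q U1) (h2 : InterType p q U2)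
    (hdisj : U1 ∩ U2 = ∅) :
    ((∃ v α1 α2, v ≠ 0 ∧ formB p q v v = 0 ∧
        U1 = {w | formB p q v w > α1} ∧ U2 = {w | formB p q (-v) w > α2} ∧ α1 ≥ -α2) ∨
      (∃ v, (U1 = {w | formB p q (w - v) (w - v) > 0} ∧
              U2 = {w | formB p q (w - v) (w - v) < 0}) ∨
            (U1 = {w | formB p q (w - v) (w - v) < 0} ∧
              U2 = {w | formB p q (w - v) (w - v) > 0}))) ∧
    (∀ U3, InterType p q U3 → (U3 ∩ (U1 ∪ U2)).Nonempty) := by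
  have hd : ∀ w : Fin (p + q) → ℝ, w ∈ U1 → w ∈ U2 → False := fun w hw1 hw2 =>
    Set.eq_empty_iff_forall_notMem.mp hdisj w ⟨hw1, hw2⟩
  rcases h1 with ⟨a, rfl⟩ | ⟨a, rfl⟩ | ⟨v, α1, hv, hiso, rfl⟩ <;>
    rcases h2 with ⟨b, rfl⟩ | ⟨b, rfl⟩ | ⟨u, α2, hu, huiso, rfl⟩
  · obtain ⟨w, hw1, hw2⟩ := meet_SS p q hq a b
    exact (hd w hw1 hw2).elim
  · by_cases hab : a = b
    · subst hab
      refine ⟨Or.inr ⟨a, Or.inl ⟨rfl, rfl⟩⟩, fun U3 h3 => cover_ST p q hp hq a U3 h3⟩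
    · obtain ⟨w, hw1, hw2⟩ := meet_ST p q hp hq a b hab
      exact (hd w hw1 hw2).elim
  · obtain ⟨w, hw1, hw2⟩ := meet_SH p q a u α2 hu huiso
    exact (hd w hw1 hw2).elim
  · by_cases hab : b = a
    · subst hab
      refine ⟨Or.inr ⟨b, Or.inr ⟨rfl, rfl⟩⟩, fun U3 h3 => ?_⟩
      rw [Set.union_comm]
      exact cover_ST p q hp hq b U3 h3
    · obtain ⟨w, hw1, hw2⟩ := meet_ST p q hp hq b a hab
      exact (hd w hw2 hw1).elim
  · obtain ⟨w, hw1, hw2⟩ := meet_TT p q hp a b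
    exact (hd w hw1 hw2).elim
  · obtain ⟨w, hw1, hw2⟩ := meet_TH p q a u α2 hu huiso
    exact (hd w hw1 hw2).elim
  · obtain ⟨w, hw1, hw2⟩ := meet_SH p q b v α1 hv hiso
    exact (hd w hw2 hw1).elim
  · obtain ⟨w, hw1, hw2⟩ := meet_TH p q b v α1 hv hiso
    exact (hd w hw2 hw1).elim
  · by_cases hcu : ∃ c : ℝ, u = c • v
    · obtain ⟨c, rfl⟩ := hcu
      have hc0 : c ≠ 0 := by rintro rfl; simp at hu
      rcases lt_or_gt_of_ne hc0 with hneg | hpos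
      · have hα : α1 ≥ α2 / c := by
          by_contra hlt
          push_neg at hlt
          obtain ⟨w, hw⟩ := formB_surj p q v hv ((α1 + α2 / c) / 2)
          apply hd w
          · show α1 < formB p q v w
            rw [hw]; linarith
          · show α2 < formB p q (c • v) w
            rw [formB_smul_left, hw]
            have h2 : (α1 + α2 / c) / 2 < α2 / c := by linarith
            have := (lt_div_iff_of_neg hneg).mp h2
            linarith
        have hcpos : 0 < -c := by linarith
        constructor
        · left
          refine ⟨v, α1, α2 / (-c), hv, hiso, rfl, ?_, ?_⟩
          · ext w
            show α2 < formB p q (c • v) w ↔ α2 / (-c) < formB p q (-v) w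
            rw [formB_smul_left, formB_neg_left, div_lt_iff₀ hcpos,
              show -formB p q v w * -c = c * formB p q v w from by ring]
          · rw [div_neg, neg_neg]
            exact hα
        · exact fun U3 h3 => cover_HH p q hp hq v hv hiso c α1 α2 hneg U3 h3
      · obtain ⟨w, hw1, hw2⟩ := meet_HH_pos p q v hv c α1 α2 hpos
        exact (hd w hw1 hw2).elim
    · push_neg at hcu
      obtain ⟨w, hw1, hw2⟩ := meet_HH_indep p q v u hv hcu α1 α2
      exact (hd w hw1 hw2).elim
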